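/- If t rewrites to u in one step of a constructor rewrite system R, G is a constructor-shared closed term graph with 𝕋(G) = t, then there exists a term graph I such that G rewrites to I in one step of the graph rewrite system corresponding to R and 𝕋(I) = u. -/

import Mathlib

/-- First-order terms over a signature with constructors `C` and function symbols `F`,
with variables drawn from ℕ. -/
inductive GTerm (C F : Type) : Type
  | var : ℕ → GTerm C F
  | con : C → List (GTerm C F) → GTerm C F
  | fn : F → List (GTerm C F) → GTerm C F

namespace GTerm

variable {C F : Type}

/-- Constructor terms: built only from constructors. -/
inductive IsConTerm : GTerm C F → Prop
  | con {c ts} : (∀ t ∈ ts, IsConTerm t) → IsConTerm (con c ts)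

/-- Patterns: built from constructors and variables. -/
inductive IsPattern : GTerm C F → Prop
  | var {x} : IsPattern (var x)
  | con {c ts} : (∀ t ∈ ts, IsPattern t) → IsPattern (con c ts)

/-- Arity discipline: every symbol is applied to as many arguments as its arity. -/
inductive WFT (arc : C → ℕ) (arf : F → ℕ) : GTerm C F → Prop
  | var {x} : WFT arc arf (var x)
  | con {c ts} : ts.length = arc c → (∀ t ∈ ts, WFT arc arf t) → WFT arc arf (con c ts)
  | fn {f ts} : ts.length = arf f → (∀ t ∈ ts, WFT arc arf t) → WFT arc arf (fn f ts)

/-- The list of variable occurrences of a term, in left-to-right order. -/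
def varsL : GTerm C F → List ℕ
  | var x => [x]
  | con _ ts => ts.attach.flatMap (fun t => varsL t.1)
  | fn _ ts => ts.attach.flatMap (fun t => varsL t.1)
decreasing_by
  all_goals simp_wf
  all_goals have := List.sizeOf_lt_of_mem t.2
  all_goals omega

/-- Substitution of terms for variables. -/
def gsubst (σ : ℕ → Option (GTerm C F)) : GTerm C F → GTerm C F
  | var y => (σ y).getD (var y)
  | con c ts => con c (ts.attach.map (fun t => gsubst σ t.1))
  | fn f ts => fn f (ts.attach.map (fun t => gsubst σ t.1))
decreasing_by
  all_goals simp_wf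
  all_goals have := List.sizeOf_lt_of_mem t.2
  all_goals omega

end GTerm

/-- A constructor rewrite rule f(p₁,…,pₙ) → rhs. -/
structure GRule (C F : Type) where
  f : F
  args : List (GTerm C F)
  rhs : GTerm C F

/-- Well-formedness of a rule: the lhs arguments are patterns respecting the
arities, the lhs is linear, and the rhs is a well-formed term all of whose
variables occur in the lhs. -/
def GRule.WF {C F : Type} (arc : C → ℕ) (arf : F → ℕ) (r : GRule C F) : Prop :=
  (∀ p ∈ r.args, GTerm.IsPattern p) ∧
  r.args.length = arf r.f ∧
  (∀ p ∈ r.args, GTerm.WFT arc arf p) ∧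
  (r.args.flatMap GTerm.varsL).Nodup ∧
  GTerm.WFT arc arf r.rhs ∧
  (∀ x ∈ r.rhs.varsL, x ∈ r.args.flatMap GTerm.varsL)

/-- Non-overlapping rules: the left-hand sides of distinct rules cannot be
instantiated (by constructor terms) to a common term. -/
def NonOverlapping {C F : Type} (Rs : Set (GRule C F)) : Prop :=
  ∀ r₁ ∈ Rs, ∀ r₂ ∈ Rs, r₁ ≠ r₂ → r₁.f = r₂.f →
    ¬ ∃ σ τ : ℕ → Option (GTerm C F),
        (∀ x t, σ x = some t → GTerm.IsConTerm t) ∧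
        (∀ x t, τ x = some t → GTerm.IsConTerm t) ∧
        r₁.args.map (GTerm.gsubst σ) = r₂.args.map (GTerm.gsubst τ)

/-- An orthogonal constructor rewrite system. -/
def Orthogonal {C F : Type} (arc : C → ℕ) (arf : F → ℕ) (Rs : Set (GRule C F)) : Prop :=
  (∀ r ∈ Rs, GRule.WF arc arf r) ∧ NonOverlapping Rs

/-- One-step (call-by-value) rewriting: a rule instantiated by constructor terms
fires, closed under arbitrary contexts. -/
inductive XStep {C F : Type} (Rs : Set (GRule C F)) : GTerm C F → GTerm C F → Prop
  | root {r : GRule C F} {σ : ℕ → Option (GTerm C F)} :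
      r ∈ Rs → (∀ x t, σ x = some t → GTerm.IsConTerm t) →
      XStep Rs (GTerm.fn r.f (r.args.map (GTerm.gsubst σ))) (GTerm.gsubst σ r.rhs)
  | conCtx {c ts₁ t t' ts₂} : XStep Rs t t' →
      XStep Rs (GTerm.con c (ts₁ ++ t :: ts₂)) (GTerm.con c (ts₁ ++ t' :: ts₂))
  | fnCtx {f ts₁ t t' ts₂} : XStep Rs t t' →
      XStep Rs (GTerm.fn f (ts₁ ++ t :: ts₂)) (GTerm.fn f (ts₁ ++ t' :: ts₂))

/-- Normal forms of the rewrite system. -/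
def XNormal {C F : Type} (Rs : Set (GRule C F)) (t : GTerm C F) : Prop :=
  ¬ ∃ u, XStep Rs t u

/-- Closed terms: no variables. -/
def GClosed {C F : Type} (t : GTerm C F) : Prop := t.varsL = []

open scoped Classical

/-- A term graph over a signature with constructors `C` and function symbols `F`:
a finite set of vertices (natural numbers), a partial labelling, an ordered list of
successors for every vertex (empty for unlabelled vertices), and a root. -/
structure TGraph (C F : Type) where
  V : Finset ℕ
  lab : ℕ → Option (C ⊕ F)
  succ : ℕ → List ℕ
  root : ℕ

namespace TGraph

variable {C F : Type}

/-- The arity of a symbol. -/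
def arity (arc : C → ℕ) (arf : F → ℕ) : C ⊕ F → ℕ := Sum.elim arc arf

/-- The edge relation of a graph. -/
def edge (G : TGraph C F) (a b : ℕ) : Prop := a ∈ G.V ∧ b ∈ G.succ a

/-- Reachability in a graph. -/
def Reach (G : TGraph C F) (a b : ℕ) : Prop := Relation.ReflTransGen G.edge a b

/-- Well-formed graphs: the root is a vertex, edges stay inside the vertex set,
the out-degree of every vertex matches the arity of its label (0 if unlabelled),
and the graph is acyclic. -/
structure WFG (arc : C → ℕ) (arf : F → ℕ) (G : TGraph C F) : Prop where
  root_mem : G.root ∈ G.V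
  succ_mem : ∀ v ∈ G.V, ∀ w ∈ G.succ v, w ∈ G.V
  arity_ok : ∀ v ∈ G.V, (G.succ v).length = ((G.lab v).map (arity arc arf)).getD 0
  acyclic : ∀ v, ¬ Relation.TransGen G.edge v v

/-- A graph is closed if its labelling is total on vertices. -/
def ClosedG (G : TGraph C F) : Prop := ∀ v ∈ G.V, (G.lab v).isSome

/-- Follow a path (a list of child indices) from a vertex. -/
def follow (G : TGraph C F) : ℕ → List ℕ → Option ℕ
  | v, [] => some v
  | v, i :: is => ((G.succ v)[i]?).bind (fun w => follow G w is)

/-- A graph is constructor-shared if every vertex reachable from the root by two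
distinct paths only reaches constructor-labelled vertices. -/
def ConstructorShared (G : TGraph C F) : Prop :=
  ∀ v (p q : List ℕ), follow G G.root p = some v → follow G G.root q = some v →
    p ≠ q → ∀ w, G.Reach v w → ∃ c, G.lab w = some (Sum.inl c)

/-- `Unfolds G v t`: the (closed) term `t` is the unfolding of the graph `G`
at vertex `v`. -/
inductive Unfolds (G : TGraph C F) : ℕ → GTerm C F → Prop
  | con {v : ℕ} {c : C} {ts : List (GTerm C F)} :
      G.lab v = some (Sum.inl c) → (G.succ v).length = ts.length →
      (∀ (j : ℕ) (h : j < ts.length), Unfolds G ((G.succ v).getD j 0) ts[j]) →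
      Unfolds G v (GTerm.con c ts)
  | fn {v : ℕ} {f : F} {ts : List (GTerm C F)} :
      G.lab v = some (Sum.inr f) → (G.succ v).length = ts.length →
      (∀ (j : ℕ) (h : j < ts.length), Unfolds G ((G.succ v).getD j 0) ts[j]) →
      Unfolds G v (GTerm.fn f ts)

/-- A homomorphism from the subgraph of `H` rooted at `l` into `G`. -/
def IsHom (H : TGraph C F) (l : ℕ) (G : TGraph C F) (φ : ℕ → ℕ) : Prop :=
  ∀ v, H.Reach l v → φ v ∈ G.V ∧
    ∀ a, H.lab v = some a →
      G.lab (φ v) = some a ∧ G.succ (φ v) = (H.succ v).map φ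

/-- A redex in `G` for a rule graph `(H, l, r)`: a homomorphism from the subgraph of
`H` rooted at `l` into `G` such that every path starting at the image of an
unlabelled (variable) node is a constructor path. -/
def IsRedex (H : TGraph C F) (l : ℕ) (G : TGraph C F) (φ : ℕ → ℕ) : Prop :=
  IsHom H l G φ ∧
  ∀ v, H.Reach l v → H.lab v = none →
    ∀ w, G.Reach (φ v) w → ∃ c, G.lab w = some (Sum.inl c)

/-- Firing a redex `(H, l, r, φ)` in `G`: the build phase copies the part of the
right-hand side subgraph not contained in the left-hand side subgraph (fresh
vertices are obtained by adding the offset `off`), the redirection phase redirects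
all edges pointing to `φ l` towards (the copy of) `r` and re-roots if necessary,
and the garbage-collection phase keeps only the vertices reachable from the new
root. -/
noncomputable def fire (G : TGraph C F) (H : TGraph C F) (l r : ℕ) (φ : ℕ → ℕ) :
    TGraph C F :=
  let off := G.V.sup id + 1
  let ψ : ℕ → ℕ := fun v => if H.Reach l v then φ v else v + off
  let tgt := ψ r
  let rd : ℕ → ℕ := fun w => if w = φ l then tgt else w
  let copies := (H.V.filter (fun v => H.Reach r v ∧ ¬ H.Reach l v)).image (· + off)
  let lab1 : ℕ → Option (C ⊕ F) :=
    fun v => if v ∈ copies then H.lab (v - off) else G.lab v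
  let succ1 : ℕ → List ℕ :=
    fun v => if v ∈ copies then ((H.succ (v - off)).map ψ).map rd
             else (G.succ v).map rd
  let root1 := rd G.root
  let V1 := G.V ∪ copies
  { V := V1.filter
      (fun v => Relation.ReflTransGen (fun a b => a ∈ V1 ∧ b ∈ succ1 a) root1 v),
    lab := lab1, succ := succ1, root := root1 }

end TGraph

/-- State of the tree-graph builder. -/
structure GB (C F : Type) where
  next : ℕ
  lab : ℕ → Option (C ⊕ F)
  succ : ℕ → List ℕ

mutual
/-- Build the tree of a term on top of a builder state, the (already allocated)
node `vm x` standing for the variable `x`; returns the root of the new tree. -/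
def buildT {C F : Type} (vm : ℕ → ℕ) : GTerm C F → GB C F → ℕ × GB C F
  | .var x, s => (vm x, s)
  | .con c ts, s =>
      let p := buildL vm ts s
      (p.2.next,
        ⟨p.2.next + 1,
         fun v => if v = p.2.next then some (Sum.inl c) else p.2.lab v,
         fun v => if v = p.2.next then p.1 else p.2.succ v⟩)
  | .fn f ts, s =>
      let p := buildL vm ts s
      (p.2.next,
        ⟨p.2.next + 1,
         fun v => if v = p.2.next then some (Sum.inr f) else p.2.lab v,
         fun v => if v = p.2.next then p.1 else p.2.succ v⟩)

def buildL {C F : Type} (vm : ℕ → ℕ) : List (GTerm C F) → GB C F → List ℕ × GB C F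
  | [], s => ([], s)
  | t :: ts, s =>
      let p := buildT vm t s
      let q := buildL vm ts p.2
      (p.1 :: q.1, q.2)
end

/-- The term graph of a term: one unlabelled node for each variable (shared), and
a fresh node for every other symbol occurrence.  For a closed term this is the
tree term graph 𝔾(t). -/
def graphOfTerm {C F : Type} (t : GTerm C F) : TGraph C F :=
  let vs := t.varsL.dedup
  let vm : ℕ → ℕ := fun x => vs.idxOf x
  let p := buildT vm t ⟨vs.length, fun _ => none, fun _ => []⟩
  { V := Finset.range p.2.next, lab := p.2.lab, succ := p.2.succ, root := p.1 }

/-- The graph rewrite rule corresponding to a term rewrite rule: the trees of the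
left- and right-hand sides, sharing the nodes representing the same variable.
Returns the rule graph together with its left and right roots. -/
def ruleGraph {C F : Type} (r : GRule C F) : TGraph C F × ℕ × ℕ :=
  let lhs : GTerm C F := GTerm.fn r.f r.args
  let vs := lhs.varsL.dedup
  let vm : ℕ → ℕ := fun x => vs.idxOf x
  let p := buildT vm lhs ⟨vs.length, fun _ => none, fun _ => []⟩
  let q := buildT vm r.rhs p.2
  ({ V := Finset.range q.2.next, lab := q.2.lab, succ := q.2.succ, root := p.1 },
   p.1, q.1)

/-- One-step graph rewriting in the graph rewrite system corresponding to the
rules `Rs`. -/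
inductive GStep {C F : Type} (Rs : Set (GRule C F)) : TGraph C F → TGraph C F → Prop
  | mk {G : TGraph C F} {r : GRule C F} {φ : ℕ → ℕ} :
      r ∈ Rs →
      TGraph.IsRedex (ruleGraph r).1 (ruleGraph r).2.1 G φ →
      GStep Rs G (TGraph.fire G (ruleGraph r).1 (ruleGraph r).2.1 (ruleGraph r).2.2 φ)

/-- Graph normal forms: no redex can be fired. -/
def GNormal {C F : Type} (Rs : Set (GRule C F)) (G : TGraph C F) : Prop :=
  ¬ ∃ I, GStep Rs G I

/- ===================== Auxiliary development ===================== -/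

namespace GAux

open GTerm TGraph

variable {C F : Type}

@[simp] theorem varsL_var (x : ℕ) : (GTerm.var x : GTerm C F).varsL = [x] := by
  simp [GTerm.varsL]

@[simp] theorem varsL_con (c : C) (ts : List (GTerm C F)) :
    (GTerm.con c ts).varsL = ts.flatMap GTerm.varsL := by
  rw [GTerm.varsL]; simp

@[simp] theorem varsL_fn (f : F) (ts : List (GTerm C F)) :
    (GTerm.fn f ts).varsL = ts.flatMap GTerm.varsL := by
  rw [GTerm.varsL]; simp

@[simp] theorem gsubst_var (σ : ℕ → Option (GTerm C F)) (x : ℕ) :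
    GTerm.gsubst σ (GTerm.var x) = (σ x).getD (GTerm.var x) := by
  simp [GTerm.gsubst]

@[simp] theorem gsubst_con (σ : ℕ → Option (GTerm C F)) (c : C) (ts : List (GTerm C F)) :
    GTerm.gsubst σ (GTerm.con c ts) = GTerm.con c (ts.map (GTerm.gsubst σ)) := by
  rw [GTerm.gsubst]; simp

@[simp] theorem gsubst_fn (σ : ℕ → Option (GTerm C F)) (f : F) (ts : List (GTerm C F)) :
    GTerm.gsubst σ (GTerm.fn f ts) = GTerm.fn f (ts.map (GTerm.gsubst σ)) := by
  rw [GTerm.gsubst]; simp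

theorem map_getD {α β : Type*} (f : α → β) (l : List α) (j : ℕ) (hj : j < l.length)
    (d : α) (d' : β) : (l.map f).getD j d' = f (l.getD j d) := by
  rw [List.getD_eq_getElem _ _ (by simpa using hj), List.getD_eq_getElem _ _ hj]
  simp

/-- Replacement of the subterm at a given position. -/
inductive ReplAt (R : GTerm C F) : GTerm C F → List ℕ → GTerm C F → Prop
  | nil (s : GTerm C F) : ReplAt R s [] R
  | con {c : C} {ts : List (GTerm C F)} {i : ℕ} {p : List ℕ} {s' : GTerm C F}
      (h : i < ts.length) :
      ReplAt R ts[i] p s' → ReplAt R (GTerm.con c ts) (i :: p) (GTerm.con c (ts.set i s'))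
  | fn {f : F} {ts : List (GTerm C F)} {i : ℕ} {p : List ℕ} {s' : GTerm C F}
      (h : i < ts.length) :
      ReplAt R ts[i] p s' → ReplAt R (GTerm.fn f ts) (i :: p) (GTerm.fn f (ts.set i s'))

theorem getElem?_eq_get_aux {α : Type*} {l : List α} {n : ℕ} (h : n < l.length) :
    l[n]? = some (l.get ⟨n, h⟩) := List.getElem?_eq_getElem h

theorem follow_cons (G : TGraph C F) (v : ℕ) (i : ℕ) (p : List ℕ) :
    G.follow v (i :: p) = (G.succ v)[i]?.bind (fun w => G.follow w p) := rfl

/-- Members of a `follow`-path from a vertex of a well-formed graph stay in the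
graph and are reachable. -/
theorem follow_mem_reach {arc : C → ℕ} {arf : F → ℕ} {G : TGraph C F}
    (hwf : G.WFG arc arf) :
    ∀ (p : List ℕ) (v w : ℕ), v ∈ G.V → G.follow v p = some w →
      w ∈ G.V ∧ G.Reach v w := by
  intro p
  induction p with
  | nil => intro v w hv h; cases h; exact ⟨hv, Relation.ReflTransGen.refl⟩
  | cons i p ih =>
    intro v w hv h
    rw [follow_cons] at h
    rcases Option.bind_eq_some_iff.mp h with ⟨b, hb, hfol⟩
    have hbmem : b ∈ G.succ v := List.mem_of_getElem? hb
    have hbV : b ∈ G.V := hwf.succ_mem v hv b hbmem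
    have hedge : G.edge v b := ⟨hv, hbmem⟩
    rcases ih b w hbV hfol with ⟨h1, h2⟩
    exact ⟨h1, Relation.ReflTransGen.head hedge h2⟩

theorem follow_append (G : TGraph C F) :
    ∀ (p q : List ℕ) (v : ℕ),
      G.follow v (p ++ q) = (G.follow v p).bind (fun w => G.follow w q) := by
  intro p
  induction p with
  | nil => intro q v; rfl
  | cons i p ih =>
    intro q v
    rw [List.cons_append, follow_cons, follow_cons]
    cases (G.succ v)[i]? with
    | none => rfl
    | some b => simp only [Option.bind_some]; exact ih q b

theorem reach_exists_follow {G : TGraph C F} {v w : ℕ} (h : G.Reach v w) :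
    ∃ p, G.follow v p = some w := by
  induction h with
  | refl => exact ⟨[], rfl⟩
  | tail _ hedge ih =>
    rcases ih with ⟨p, hp⟩
    rcases hedge with ⟨hmem, hsucc⟩
    rcases List.get_of_mem hsucc with ⟨i, hi⟩
    refine ⟨p ++ [i.1], ?_⟩
    rw [follow_append, hp, Option.bind_some, follow_cons, getElem?_eq_get_aux i.2, hi,
      Option.bind_some]
    rfl

/-- Unfolding of a constructor term only reaches constructor-labelled vertices. -/
theorem conterm_reach {arc : C → ℕ} {arf : F → ℕ} {G : TGraph C F}
    (hwf : G.WFG arc arf) :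
    ∀ {v : ℕ} {s : GTerm C F}, G.Unfolds v s → IsConTerm s → v ∈ G.V →
      ∀ w, G.Reach v w → ∃ c, G.lab w = some (Sum.inl c) := by
  intro v s hunf
  induction hunf with
  | fn hlab hlen hchild ih =>
    intro hcon; cases hcon
  | con hlab hlen hchild ih =>
    rename_i v c ts
    intro hcon hv w hreach
    rcases hreach.cases_head with h | ⟨b, hedge, hreach'⟩
    · exact ⟨c, h ▸ hlab⟩
    · rcases hedge with ⟨_, hbsucc⟩
      rcases List.get_of_mem hbsucc with ⟨⟨i, hilt⟩, hi⟩
      have hilt' : i < ts.length := by rw [← hlen]; exact hilt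
      have hbeq : b = (G.succ v).getD i 0 := by
        rw [List.getD_eq_getElem _ _ hilt]; rw [← hi]; simp
      cases hcon with
      | con hall =>
        have hmemti : ts[i] ∈ ts := List.getElem_mem _
        have hbV : b ∈ G.V := hwf.succ_mem v hv b hbsucc
        exact ih i hilt' (hall _ hmemti) (hbeq ▸ hbV) w (hbeq ▸ hreach')

theorem set_append_len {α : Type*} (l₁ l₂ : List α) (a b : α) :
    (l₁ ++ a :: l₂).set l₁.length b = l₁ ++ b :: l₂ := by
  induction l₁ with
  | nil => rfl
  | cons x l ih => simp [List.set, ih]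

theorem getElem_append_len {α : Type*} (l₁ l₂ : List α) (a : α)
    (h : l₁.length < (l₁ ++ a :: l₂).length) : (l₁ ++ a :: l₂)[l₁.length] = a := by
  induction l₁ with
  | nil => rfl
  | cons x l ih => simpa using ih (by simpa using h)

/-- Locate the redex of a term rewrite step in a graph unfolding to the source. -/
theorem locate {Rs : Set (GRule C F)} {t u : GTerm C F} (hstep : XStep Rs t u)
    {arc : C → ℕ} {arf : F → ℕ} {G : TGraph C F} (hwf : G.WFG arc arf) :
    ∀ v, v ∈ G.V → G.Unfolds v t →
    ∃ (ro : GRule C F) (σ : ℕ → Option (GTerm C F)) (p : List ℕ) (wv : ℕ),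
      ro ∈ Rs ∧ (∀ x c, σ x = some c → IsConTerm c) ∧
      G.follow v p = some wv ∧ wv ∈ G.V ∧
      G.Unfolds wv (GTerm.fn ro.f (ro.args.map (GTerm.gsubst σ))) ∧
      ReplAt (GTerm.gsubst σ ro.rhs) t p u := by
  induction hstep with
  | @root r σ hr hσ =>
    intro v hv hunf
    exact ⟨r, σ, [], v, hr, hσ, rfl, hv, hunf, ReplAt.nil _⟩
  | @conCtx c ts₁ t t' ts₂ hstep' ih =>
    intro v hv hunf
    cases hunf with
    | con hlab hlen hchild =>
      set j := ts₁.length with hjdef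
      have hj : j < (ts₁ ++ t :: ts₂).length := by simp [hjdef]
      have hjs : j < (G.succ v).length := by rw [hlen]; exact hj
      have hgetj : (ts₁ ++ t :: ts₂)[j] = t := getElem_append_len _ _ _ hj
      set vj := (G.succ v).getD j 0 with hvjdef
      have hvjmem : vj ∈ G.succ v := by
        rw [hvjdef, List.getD_eq_getElem _ _ hjs]; exact List.getElem_mem _
      have hvjV : vj ∈ G.V := hwf.succ_mem v hv vj hvjmem
      have hunfj : G.Unfolds vj t := by
        have := hchild j hj; rwa [hgetj] at this
      rcases ih vj hvjV hunfj with ⟨ro, σ, p, wv, h1, h2, h3, h4, h5, h6⟩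
      refine ⟨ro, σ, j :: p, wv, h1, h2, ?_, h4, h5, ?_⟩
      · rw [follow_cons, getElem?_eq_get_aux hjs, Option.bind_some]
        have : (G.succ v).get ⟨j, hjs⟩ = vj := by
          rw [hvjdef, List.getD_eq_getElem _ _ hjs]; rfl
        rw [this]; exact h3
      · have := ReplAt.con (R := GTerm.gsubst σ ro.rhs) (c := c) hj (hgetj ▸ h6)
        rwa [hjdef, set_append_len] at this
  | @fnCtx f ts₁ t t' ts₂ hstep' ih =>
    intro v hv hunf
    cases hunf with
    | fn hlab hlen hchild =>
      set j := ts₁.length with hjdef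
      have hj : j < (ts₁ ++ t :: ts₂).length := by simp [hjdef]
      have hjs : j < (G.succ v).length := by rw [hlen]; exact hj
      have hgetj : (ts₁ ++ t :: ts₂)[j] = t := getElem_append_len _ _ _ hj
      set vj := (G.succ v).getD j 0 with hvjdef
      have hvjmem : vj ∈ G.succ v := by
        rw [hvjdef, List.getD_eq_getElem _ _ hjs]; exact List.getElem_mem _
      have hvjV : vj ∈ G.V := hwf.succ_mem v hv vj hvjmem
      have hunfj : G.Unfolds vj t := by
        have := hchild j hj; rwa [hgetj] at this
      rcases ih vj hvjV hunfj with ⟨ro, σ, p, wv, h1, h2, h3, h4, h5, h6⟩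
      refine ⟨ro, σ, j :: p, wv, h1, h2, ?_, h4, h5, ?_⟩
      · rw [follow_cons, getElem?_eq_get_aux hjs, Option.bind_some]
        have : (G.succ v).get ⟨j, hjs⟩ = vj := by
          rw [hvjdef, List.getD_eq_getElem _ _ hjs]; rfl
        rw [this]; exact h3
      · have := ReplAt.fn (R := GTerm.gsubst σ ro.rhs) (f := f) hj (hgetj ▸ h6)
        rwa [hjdef, set_append_len] at this

/-- Union of a list of finsets. -/
def unionL (Ls : List (Finset ℕ)) : Finset ℕ := Ls.foldr (· ∪ ·) ∅

@[simp] theorem mem_unionL {u : ℕ} {Ls : List (Finset ℕ)} :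
    u ∈ unionL Ls ↔ ∃ T ∈ Ls, u ∈ T := by
  induction Ls with
  | nil => simp [unionL]
  | cons S Ls ih =>
    show u ∈ S ∪ unionL Ls ↔ _
    rw [Finset.mem_union, ih]
    simp

theorem getD_mem_of_lt {α : Type*} {l : List α} {j : ℕ} (hj : j < l.length) (d : α) :
    l.getD j d ∈ l := by
  rw [List.getD_eq_getElem _ _ hj]; exact List.getElem_mem _

theorem mem_unionL_getD {u : ℕ} {Ls : List (Finset ℕ)} {j : ℕ} (hj : j < Ls.length)
    (hu : u ∈ Ls.getD j ∅) : u ∈ unionL Ls :=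
  mem_unionL.mpr ⟨_, getD_mem_of_lt hj ∅, hu⟩

theorem mem_getD_of_mem_mem {u : ℕ} {Ls : List (Finset ℕ)} {T : Finset ℕ}
    (hT : T ∈ Ls) (hu : u ∈ T) : ∃ j, j < Ls.length ∧ u ∈ Ls.getD j ∅ := by
  rcases List.mem_iff_getElem.mp hT with ⟨j, hj, hget⟩
  exact ⟨j, hj, by rw [List.getD_eq_getElem _ _ hj, hget]; exact hu⟩

/-- `TR lab succ vm t v S` : in the labelled graph given by `lab`/`succ`, the
vertex `v` is the root of a tree (with variable nodes given by `vm`) representing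
the term `t`, with node set `S`. -/
inductive TR (lab : ℕ → Option (C ⊕ F)) (succ : ℕ → List ℕ) (vm : ℕ → ℕ) :
    GTerm C F → ℕ → Finset ℕ → Prop
  | var {x : ℕ} : lab (vm x) = none → succ (vm x) = [] →
      TR lab succ vm (GTerm.var x) (vm x) {vm x}
  | con {c : C} {ts : List (GTerm C F)} {v : ℕ} {rs : List ℕ} {Ls : List (Finset ℕ)} :
      lab v = some (Sum.inl c) → succ v = rs →
      rs.length = ts.length → Ls.length = ts.length →
      (∀ j, j < ts.length → TR lab succ vm (ts.getD j (GTerm.var 0)) (rs.getD j 0) (Ls.getD j ∅)) →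
      (∀ T ∈ Ls, v ∉ T) →
      (∀ i j, i < ts.length → j < ts.length → i ≠ j → ∀ u, u ∈ Ls.getD i ∅ →
        u ∈ Ls.getD j ∅ → (∃ x ∈ (ts.getD i (GTerm.var 0)).varsL, u = vm x) ∧
          (∃ y ∈ (ts.getD j (GTerm.var 0)).varsL, u = vm y)) →
      TR lab succ vm (GTerm.con c ts) v (insert v (unionL Ls))
  | fn {f : F} {ts : List (GTerm C F)} {v : ℕ} {rs : List ℕ} {Ls : List (Finset ℕ)} :
      lab v = some (Sum.inr f) → succ v = rs →
      rs.length = ts.length → Ls.length = ts.length →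
      (∀ j, j < ts.length → TR lab succ vm (ts.getD j (GTerm.var 0)) (rs.getD j 0) (Ls.getD j ∅)) →
      (∀ T ∈ Ls, v ∉ T) →
      (∀ i j, i < ts.length → j < ts.length → i ≠ j → ∀ u, u ∈ Ls.getD i ∅ →
        u ∈ Ls.getD j ∅ → (∃ x ∈ (ts.getD i (GTerm.var 0)).varsL, u = vm x) ∧
          (∃ y ∈ (ts.getD j (GTerm.var 0)).varsL, u = vm y)) →
      TR lab succ vm (GTerm.fn f ts) v (insert v (unionL Ls))

variable {lab : ℕ → Option (C ⊕ F)} {succ : ℕ → List ℕ} {vm : ℕ → ℕ}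

theorem TR.root_mem {t : GTerm C F} {v : ℕ} {S : Finset ℕ}
    (h : TR lab succ vm t v S) : v ∈ S := by
  cases h <;> simp

theorem TR.succ_closed {t : GTerm C F} {v : ℕ} {S : Finset ℕ}
    (h : TR lab succ vm t v S) : ∀ u ∈ S, ∀ b ∈ succ u, b ∈ S := by
  induction h with
  | var hlab hsucc =>
    intro u hu b hb
    simp only [Finset.mem_singleton] at hu
    rw [hu, hsucc] at hb; cases hb
  | con hlab hsucc hrs hLs hch hnot hdisj ih =>
    rename_i c ts v rs Ls
    intro u hu b hb
    rcases Finset.mem_insert.mp hu with rfl | hu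
    · rw [hsucc] at hb
      rcases List.mem_iff_getElem.mp hb with ⟨j, hj, hget⟩
      have hj' : j < ts.length := hrs ▸ hj
      have hroot : rs.getD j 0 ∈ Ls.getD j ∅ := (hch j hj').root_mem
      rw [List.getD_eq_getElem _ _ hj, hget] at hroot
      exact Finset.mem_insert_of_mem (mem_unionL_getD (by omega) hroot)
    · rcases mem_unionL.mp hu with ⟨T, hT, huT⟩
      rcases mem_getD_of_mem_mem hT huT with ⟨j, hj, hu'⟩
      have hj' : j < ts.length := hLs ▸ hj
      exact Finset.mem_insert_of_mem (mem_unionL_getD hj (ih j hj' u hu' b hb))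
  | fn hlab hsucc hrs hLs hch hnot hdisj ih =>
    rename_i f ts v rs Ls
    intro u hu b hb
    rcases Finset.mem_insert.mp hu with rfl | hu
    · rw [hsucc] at hb
      rcases List.mem_iff_getElem.mp hb with ⟨j, hj, hget⟩
      have hj' : j < ts.length := hrs ▸ hj
      have hroot : rs.getD j 0 ∈ Ls.getD j ∅ := (hch j hj').root_mem
      rw [List.getD_eq_getElem _ _ hj, hget] at hroot
      exact Finset.mem_insert_of_mem (mem_unionL_getD (by omega) hroot)
    · rcases mem_unionL.mp hu with ⟨T, hT, huT⟩
      rcases mem_getD_of_mem_mem hT huT with ⟨j, hj, hu'⟩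
      have hj' : j < ts.length := hLs ▸ hj
      exact Finset.mem_insert_of_mem (mem_unionL_getD hj (ih j hj' u hu' b hb))

theorem TR.unlabelled {t : GTerm C F} {v : ℕ} {S : Finset ℕ}
    (h : TR lab succ vm t v S) : ∀ u ∈ S, lab u = none → ∃ x ∈ t.varsL, u = vm x := by
  induction h with
  | var hlab hsucc =>
    rename_i x
    intro u hu _; simp only [Finset.mem_singleton] at hu
    exact ⟨x, by simp, hu⟩
  | con hlab hsucc hrs hLs hch hnot hdisj ih =>
    rename_i c ts v rs Ls
    intro u hu hnone
    rcases Finset.mem_insert.mp hu with rfl | hu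
    · rw [hlab] at hnone; cases hnone
    · rcases mem_unionL.mp hu with ⟨T, hT, huT⟩
      rcases mem_getD_of_mem_mem hT huT with ⟨j, hj, hu'⟩
      have hj' : j < ts.length := hLs ▸ hj
      rcases ih j hj' u hu' hnone with ⟨x, hx, hxu⟩
      refine ⟨x, ?_, hxu⟩
      rw [varsL_con]
      exact List.mem_flatMap.mpr ⟨ts.getD j (GTerm.var 0), by
        rw [List.getD_eq_getElem _ _ hj']; exact List.getElem_mem _, hx⟩
  | fn hlab hsucc hrs hLs hch hnot hdisj ih =>
    rename_i f ts v rs Ls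
    intro u hu hnone
    rcases Finset.mem_insert.mp hu with rfl | hu
    · rw [hlab] at hnone; cases hnone
    · rcases mem_unionL.mp hu with ⟨T, hT, huT⟩
      rcases mem_getD_of_mem_mem hT huT with ⟨j, hj, hu'⟩
      have hj' : j < ts.length := hLs ▸ hj
      rcases ih j hj' u hu' hnone with ⟨x, hx, hxu⟩
      refine ⟨x, ?_, hxu⟩
      rw [varsL_fn]
      exact List.mem_flatMap.mpr ⟨ts.getD j (GTerm.var 0), by
        rw [List.getD_eq_getElem _ _ hj']; exact List.getElem_mem _, hx⟩

theorem TR.var_mem {t : GTerm C F} {v : ℕ} {S : Finset ℕ}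
    (h : TR lab succ vm t v S) : ∀ x ∈ t.varsL, vm x ∈ S := by
  induction h with
  | var hlab hsucc => intro y hy; simp at hy; simp [hy]
  | con hlab hsucc hrs hLs hch hnot hdisj ih =>
    rename_i c ts v rs Ls
    intro x hx
    rw [varsL_con, List.mem_flatMap] at hx
    rcases hx with ⟨s, hs, hxs⟩
    rcases List.mem_iff_getElem.mp hs with ⟨j, hj, hget⟩
    have : vm x ∈ Ls.getD j ∅ := ih j hj x (by rw [List.getD_eq_getElem _ _ hj, hget]; exact hxs)
    exact Finset.mem_insert_of_mem (mem_unionL_getD (by omega) this)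
  | fn hlab hsucc hrs hLs hch hnot hdisj ih =>
    rename_i f ts v rs Ls
    intro x hx
    rw [varsL_fn, List.mem_flatMap] at hx
    rcases hx with ⟨s, hs, hxs⟩
    rcases List.mem_iff_getElem.mp hs with ⟨j, hj, hget⟩
    have : vm x ∈ Ls.getD j ∅ := ih j hj x (by rw [List.getD_eq_getElem _ _ hj, hget]; exact hxs)
    exact Finset.mem_insert_of_mem (mem_unionL_getD (by omega) this)

theorem TR.mono {t : GTerm C F} {v : ℕ} {S : Finset ℕ}
    {lab' : ℕ → Option (C ⊕ F)} {succ' : ℕ → List ℕ}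
    (h : TR lab succ vm t v S)
    (hagree : ∀ u ∈ S, lab' u = lab u ∧ succ' u = succ u) :
    TR lab' succ' vm t v S := by
  induction h with
  | var hlab hsucc =>
    rename_i x
    have := hagree (vm x) (by simp)
    exact TR.var (this.1.trans hlab) (this.2.trans hsucc)
  | con hlab hsucc hrs hLs hch hnot hdisj ih =>
    rename_i c ts v rs Ls
    have hv := hagree v (by simp)
    refine TR.con (hv.1.trans hlab) (hv.2.trans hsucc) hrs hLs ?_ hnot hdisj
    intro j hj
    exact ih j hj (fun u hu => hagree u (Finset.mem_insert_of_mem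
      (mem_unionL_getD (by omega) hu)))
  | fn hlab hsucc hrs hLs hch hnot hdisj ih =>
    rename_i f ts v rs Ls
    have hv := hagree v (by simp)
    refine TR.fn (hv.1.trans hlab) (hv.2.trans hsucc) hrs hLs ?_ hnot hdisj
    intro j hj
    exact ih j hj (fun u hu => hagree u (Finset.mem_insert_of_mem
      (mem_unionL_getD (by omega) hu)))

/-- From the root of a `TR`-tree inside a graph `H`, every tree node is reachable. -/
theorem TR.reach {H : TGraph C F} {t : GTerm C F} {v : ℕ} {S : Finset ℕ}
    (h : TR H.lab H.succ vm t v S) (hV : ∀ u ∈ S, u ∈ H.V) :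
    ∀ u ∈ S, H.Reach v u := by
  induction h with
  | var hlab hsucc =>
    intro u hu; simp only [Finset.mem_singleton] at hu
    rw [hu]; exact Relation.ReflTransGen.refl
  | con hlab hsucc hrs hLs hch hnot hdisj ih =>
    rename_i c ts v rs Ls
    intro u hu
    rcases Finset.mem_insert.mp hu with rfl | hu
    · exact Relation.ReflTransGen.refl
    · rcases mem_unionL.mp hu with ⟨T, hT, huT⟩
      rcases mem_getD_of_mem_mem hT huT with ⟨j, hj, hu'⟩
      have hj' : j < ts.length := hLs ▸ hj
      have hsub : ∀ w ∈ Ls.getD j ∅, w ∈ H.V := fun w hw => hV w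
        (Finset.mem_insert_of_mem (mem_unionL_getD hj hw))
      have hreach := ih j hj' hsub u hu'
      have hedge : H.edge v (rs.getD j 0) := by
        refine ⟨hV v (by simp), ?_⟩
        rw [hsucc, List.getD_eq_getElem _ _ (by omega : j < rs.length)]
        exact List.getElem_mem _
      exact Relation.ReflTransGen.head hedge hreach
  | fn hlab hsucc hrs hLs hch hnot hdisj ih =>
    rename_i f ts v rs Ls
    intro u hu
    rcases Finset.mem_insert.mp hu with rfl | hu
    · exact Relation.ReflTransGen.refl
    · rcases mem_unionL.mp hu with ⟨T, hT, huT⟩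
      rcases mem_getD_of_mem_mem hT huT with ⟨j, hj, hu'⟩
      have hj' : j < ts.length := hLs ▸ hj
      have hsub : ∀ w ∈ Ls.getD j ∅, w ∈ H.V := fun w hw => hV w
        (Finset.mem_insert_of_mem (mem_unionL_getD hj hw))
      have hreach := ih j hj' hsub u hu'
      have hedge : H.edge v (rs.getD j 0) := by
        refine ⟨hV v (by simp), ?_⟩
        rw [hsucc, List.getD_eq_getElem _ _ (by omega : j < rs.length)]
        exact List.getElem_mem _
      exact Relation.ReflTransGen.head hedge hreach

/-- Everything reachable from the root of a `TR`-tree lies in the tree. -/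
theorem TR.reach_subset {H : TGraph C F} {t : GTerm C F} {v : ℕ} {S : Finset ℕ}
    (h : TR H.lab H.succ vm t v S) :
    ∀ u, H.Reach v u → u ∈ S := by
  intro u hu
  induction hu with
  | refl => exact h.root_mem
  | tail _ hedge ih => exact h.succ_closed _ ih _ hedge.2

mutual

theorem buildT_spec (vm : ℕ → ℕ) (t : GTerm C F) (s : GB C F)
    (hvm : ∀ x ∈ t.varsL, vm x < s.next ∧ s.lab (vm x) = none ∧ s.succ (vm x) = []) :
    s.next ≤ (buildT vm t s).2.next ∧
    (∀ u, u < s.next →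
      (buildT vm t s).2.lab u = s.lab u ∧ (buildT vm t s).2.succ u = s.succ u) ∧
    ∃ S, TR (buildT vm t s).2.lab (buildT vm t s).2.succ vm t (buildT vm t s).1 S ∧
      ∀ u ∈ S, u < (buildT vm t s).2.next ∧ (s.next ≤ u ∨ ∃ x ∈ t.varsL, u = vm x) := by
  cases t with
  | var x =>
    refine ⟨le_refl _, fun u _ => ⟨rfl, rfl⟩, {vm x}, ?_, ?_⟩
    · exact TR.var (hvm x (by simp)).2.1 (hvm x (by simp)).2.2
    · intro u hu
      simp only [Finset.mem_singleton] at hu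
      subst hu
      exact ⟨(hvm x (by simp)).1, Or.inr ⟨x, by simp⟩⟩
  | con c ts =>
    rw [buildT]
    dsimp only
    have hvm' : ∀ x ∈ ts.flatMap GTerm.varsL,
        vm x < s.next ∧ s.lab (vm x) = none ∧ s.succ (vm x) = [] := by
      intro x hx; exact hvm x (by simpa using hx)
    obtain ⟨hle, hpres, hlen, Ls, hLslen, hch, hbdj, hdisj⟩ := buildL_spec vm ts s hvm'
    set p := buildL vm ts s with hp
    refine ⟨by omega, ?_, insert p.2.next (unionL Ls), ?_, ?_⟩
    · intro u hu
      have hne : u ≠ p.2.next := by omega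
      simp only [hne, if_false]
      exact hpres u hu
    · refine TR.con (by simp) (by simp) hlen hLslen ?_ ?_ hdisj
      · intro j hj
        refine (hch j hj).mono ?_
        intro u hu
        have hult : u < p.2.next := (hbdj j hj u hu).1
        have hne : u ≠ p.2.next := by omega
        simp [hne]
      · intro T hT hmem
        rcases mem_getD_of_mem_mem hT hmem with ⟨j, hj, hu'⟩
        have := (hbdj j (by omega) _ hu').1
        omega
    · intro u hu
      rcases Finset.mem_insert.mp hu with rfl | hu
      · exact ⟨by omega, Or.inl (by omega)⟩
      · rcases mem_unionL.mp hu with ⟨T, hT, huT⟩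
        rcases mem_getD_of_mem_mem hT huT with ⟨j, hj, hu'⟩
        have hj' : j < ts.length := by omega
        have := hbdj j hj' u hu'
        refine ⟨by omega, ?_⟩
        rcases this.2 with h | ⟨x, hx, hxu⟩
        · exact Or.inl h
        · refine Or.inr ⟨x, ?_, hxu⟩
          rw [varsL_con]
          exact List.mem_flatMap.mpr ⟨ts.getD j (GTerm.var 0), getD_mem_of_lt hj' _, hx⟩
  | fn f ts =>
    rw [buildT]
    dsimp only
    have hvm' : ∀ x ∈ ts.flatMap GTerm.varsL,
        vm x < s.next ∧ s.lab (vm x) = none ∧ s.succ (vm x) = [] := by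
      intro x hx; exact hvm x (by simpa using hx)
    obtain ⟨hle, hpres, hlen, Ls, hLslen, hch, hbdj, hdisj⟩ := buildL_spec vm ts s hvm'
    set p := buildL vm ts s with hp
    refine ⟨by omega, ?_, insert p.2.next (unionL Ls), ?_, ?_⟩
    · intro u hu
      have hne : u ≠ p.2.next := by omega
      simp only [hne, if_false]
      exact hpres u hu
    · refine TR.fn (by simp) (by simp) hlen hLslen ?_ ?_ hdisj
      · intro j hj
        refine (hch j hj).mono ?_
        intro u hu
        have hult : u < p.2.next := (hbdj j hj u hu).1
        have hne : u ≠ p.2.next := by omega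
        simp [hne]
      · intro T hT hmem
        rcases mem_getD_of_mem_mem hT hmem with ⟨j, hj, hu'⟩
        have := (hbdj j (by omega) _ hu').1
        omega
    · intro u hu
      rcases Finset.mem_insert.mp hu with rfl | hu
      · exact ⟨by omega, Or.inl (by omega)⟩
      · rcases mem_unionL.mp hu with ⟨T, hT, huT⟩
        rcases mem_getD_of_mem_mem hT huT with ⟨j, hj, hu'⟩
        have hj' : j < ts.length := by omega
        have := hbdj j hj' u hu'
        refine ⟨by omega, ?_⟩
        rcases this.2 with h | ⟨x, hx, hxu⟩
        · exact Or.inl h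
        · refine Or.inr ⟨x, ?_, hxu⟩
          rw [varsL_fn]
          exact List.mem_flatMap.mpr ⟨ts.getD j (GTerm.var 0), getD_mem_of_lt hj' _, hx⟩

theorem buildL_spec (vm : ℕ → ℕ) (ts : List (GTerm C F)) (s : GB C F)
    (hvm : ∀ x ∈ ts.flatMap GTerm.varsL,
      vm x < s.next ∧ s.lab (vm x) = none ∧ s.succ (vm x) = []) :
    s.next ≤ (buildL vm ts s).2.next ∧
    (∀ u, u < s.next →
      (buildL vm ts s).2.lab u = s.lab u ∧ (buildL vm ts s).2.succ u = s.succ u) ∧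
    (buildL vm ts s).1.length = ts.length ∧
    ∃ Ls : List (Finset ℕ), Ls.length = ts.length ∧
      (∀ j, j < ts.length → TR (buildL vm ts s).2.lab (buildL vm ts s).2.succ vm
        (ts.getD j (GTerm.var 0)) ((buildL vm ts s).1.getD j 0) (Ls.getD j ∅)) ∧
      (∀ j, j < ts.length → ∀ u ∈ Ls.getD j ∅, u < (buildL vm ts s).2.next ∧
        (s.next ≤ u ∨ ∃ x ∈ (ts.getD j (GTerm.var 0)).varsL, u = vm x)) ∧
      (∀ i j, i < ts.length → j < ts.length → i ≠ j → ∀ u, u ∈ Ls.getD i ∅ →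
        u ∈ Ls.getD j ∅ → (∃ x ∈ (ts.getD i (GTerm.var 0)).varsL, u = vm x) ∧
          (∃ y ∈ (ts.getD j (GTerm.var 0)).varsL, u = vm y)) := by
  cases ts with
  | nil =>
    exact ⟨le_refl _, fun u _ => ⟨rfl, rfl⟩, rfl, [], rfl, fun j hj => absurd hj (by simp),
      fun j hj => absurd hj (by simp), fun i j hi => absurd hi (by simp)⟩
  | cons t ts =>
    rw [buildL]
    dsimp only
    have hvmt : ∀ x ∈ t.varsL, vm x < s.next ∧ s.lab (vm x) = none ∧ s.succ (vm x) = [] :=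
      fun x hx => hvm x (by simp [hx])
    obtain ⟨hle1, hpres1, S, hS, hSbd⟩ := buildT_spec vm t s hvmt
    set p := buildT vm t s with hp
    have hvmts : ∀ x ∈ ts.flatMap GTerm.varsL,
        vm x < p.2.next ∧ p.2.lab (vm x) = none ∧ p.2.succ (vm x) = [] := by
      intro x hx
      have h0 := hvm x (by simp [hx])
      have h1 := hpres1 (vm x) h0.1
      exact ⟨by omega, h1.1.trans h0.2.1, h1.2.trans h0.2.2⟩
    obtain ⟨hle2, hpres2, hlen2, Ls, hLslen, hch, hbdj, hdisj⟩ := buildL_spec vm ts p.2 hvmts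
    set q := buildL vm ts p.2 with hq
    have hSbd' : ∀ u ∈ S, u < q.2.next ∧ (s.next ≤ u ∨ ∃ x ∈ t.varsL, u = vm x) := by
      intro u hu
      have := hSbd u hu
      exact ⟨by omega, this.2⟩
    refine ⟨by omega, ?_, by simpa using hlen2, S :: Ls, by simpa using hLslen, ?_, ?_, ?_⟩
    · intro u hu
      have h1 := hpres1 u hu
      have h2 := hpres2 u (by omega)
      exact ⟨h2.1.trans h1.1, h2.2.trans h1.2⟩
    · intro j hj
      cases j with
      | zero =>
        refine hS.mono ?_
        intro u hu
        exact hpres2 u (hSbd u hu).1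
      | succ j =>
        simp only [List.getD_cons_succ]
        exact hch j (by simpa using hj)
    · intro j hj u hu
      cases j with
      | zero =>
        simp only [List.getD_cons_zero] at hu
        exact hSbd' u hu
      | succ j =>
        simp only [List.getD_cons_succ] at hu ⊢
        have := hbdj j (by simpa using hj) u hu
        exact ⟨this.1, by rcases this.2 with h | h; exact Or.inl (by omega); exact Or.inr h⟩
    · intro i j hi hj hne u hui huj
      -- helper: a member of a later child's set that is below p.2.next is a variable node
      have later_var : ∀ k, k < ts.length → ∀ w ∈ Ls.getD k ∅, w < p.2.next →
          ∃ x ∈ (ts.getD k (GTerm.var 0)).varsL, w = vm x := by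
        intro k hk w hw hwlt
        rcases (hbdj k hk w hw).2 with h | h
        · omega
        · exact h
      have head_var : ∀ w ∈ S, (∃ y, w = vm y ∧ w < s.next) →
          ∃ x ∈ t.varsL, w = vm x := by
        intro w hw ⟨y, hwy, hlt⟩
        rcases (hSbd w hw).2 with h | h
        · omega
        · exact h
      cases i with
      | zero =>
        cases j with
        | zero => exact absurd rfl hne
        | succ j =>
          simp only [List.getD_cons_zero] at hui
          simp only [List.getD_cons_succ] at huj ⊢
          have hj' : j < ts.length := by simpa using hj
          have hult : u < p.2.next := (hSbd u hui).1
          rcases later_var j hj' u huj hult with ⟨y, hy, huy⟩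
          have hylt : vm y < s.next := by
            refine (hvm y ?_).1
            simp only [List.flatMap_cons, List.mem_append]
            exact Or.inr (List.mem_flatMap.mpr ⟨ts.getD j (GTerm.var 0),
              getD_mem_of_lt hj' _, hy⟩)
          have hx := head_var u hui ⟨y, huy, by omega⟩
          exact ⟨hx, ⟨y, hy, huy⟩⟩
      | succ i =>
        cases j with
        | zero =>
          simp only [List.getD_cons_succ] at hui ⊢
          simp only [List.getD_cons_zero] at huj
          have hi' : i < ts.length := by simpa using hi
          have hult : u < p.2.next := (hSbd u huj).1
          rcases later_var i hi' u hui hult with ⟨y, hy, huy⟩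
          have hylt : vm y < s.next := by
            refine (hvm y ?_).1
            simp only [List.flatMap_cons, List.mem_append]
            exact Or.inr (List.mem_flatMap.mpr ⟨ts.getD i (GTerm.var 0),
              getD_mem_of_lt hi' _, hy⟩)
          have hx := head_var u huj ⟨y, huy, by omega⟩
          exact ⟨⟨y, hy, huy⟩, hx⟩
        | succ j =>
          simp only [List.getD_cons_succ] at hui huj ⊢
          exact hdisj i j (by simpa using hi) (by simpa using hj) (by omega) u hui huj

end

theorem varsL_part_nodup (ts : List (GTerm C F)) (h : (ts.flatMap GTerm.varsL).Nodup) :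
    ∀ j, j < ts.length → (ts.getD j (GTerm.var 0)).varsL.Nodup := by
  induction ts with
  | nil => intro j hj; cases hj
  | cons t ts ih =>
    rw [List.flatMap_cons, List.nodup_append] at h
    intro j hj
    cases j with
    | zero => simpa using h.1
    | succ j => exact ih h.2.1 j (by simpa using hj)

theorem varsL_parts_disj (ts : List (GTerm C F)) (h : (ts.flatMap GTerm.varsL).Nodup) :
    ∀ i j, i < ts.length → j < ts.length → i ≠ j →
      ∀ x ∈ (ts.getD i (GTerm.var 0)).varsL, x ∉ (ts.getD j (GTerm.var 0)).varsL := by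
  induction ts with
  | nil => intro i j hi; cases hi
  | cons t ts ih =>
    rw [List.flatMap_cons, List.nodup_append] at h
    intro i j hi hj hne x hx
    cases i with
    | zero =>
      cases j with
      | zero => exact absurd rfl hne
      | succ j =>
        simp only [List.getD_cons_zero] at hx
        simp only [List.getD_cons_succ]
        intro hmem
        have hj' : j < ts.length := by simpa using hj
        exact h.2.2 x hx x (List.mem_flatMap.mpr ⟨ts.getD j (GTerm.var 0), getD_mem_of_lt hj' _, hmem⟩) rfl
    | succ i =>
      cases j with
      | zero =>
        simp only [List.getD_cons_succ] at hx
        simp only [List.getD_cons_zero]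
        intro hmem
        have hi' : i < ts.length := by simpa using hi
        exact h.2.2 x hmem x (List.mem_flatMap.mpr ⟨ts.getD i (GTerm.var 0), getD_mem_of_lt hi' _, hx⟩) rfl
      | succ j =>
        simp only [List.getD_cons_succ] at hx ⊢
        exact ih h.2.1 i j (by simpa using hi) (by simpa using hj) (by omega) x hx

/-- Existence of a matching homomorphism from a `TR`-tree representing a linear
term into a graph unfolding to an instance of the term. -/
theorem exphi {arc : C → ℕ} {arf : F → ℕ} {G : TGraph C F} (hwf : G.WFG arc arf)
    (σ : ℕ → Option (GTerm C F)) (hσ : ∀ x c, σ x = some c → IsConTerm c)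
    {Hlab : ℕ → Option (C ⊕ F)} {Hsucc : ℕ → List ℕ} {vm : ℕ → ℕ}
    {s : GTerm C F} {hv : ℕ} {S : Finset ℕ} :
    TR Hlab Hsucc vm s hv S →
    ∀ gv : ℕ, s.varsL.Nodup →
      (∀ x ∈ s.varsL, ∀ y ∈ s.varsL, vm x = vm y → x = y) →
      gv ∈ G.V → G.Unfolds gv (GTerm.gsubst σ s) →
      ∃ φ : ℕ → ℕ, φ hv = gv ∧ ∀ u ∈ S, φ u ∈ G.V ∧
        (∀ a, Hlab u = some a → G.lab (φ u) = some a ∧ G.succ (φ u) = (Hsucc u).map φ) ∧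
        (Hlab u = none → ∃ x cx, u = vm x ∧ x ∈ s.varsL ∧ σ x = some cx ∧
          IsConTerm cx ∧ G.Unfolds (φ u) cx) := by
  intro htr
  induction htr with
  | var hlab hsucc =>
    rename_i x
    intro gv _ _ hgv hunf
    rw [gsubst_var] at hunf
    cases hsx : σ x with
    | none =>
      rw [hsx, Option.getD_none] at hunf
      cases hunf
    | some cx =>
      rw [hsx, Option.getD_some] at hunf
      refine ⟨fun _ => gv, rfl, ?_⟩
      intro u hu
      simp only [Finset.mem_singleton] at hu
      subst hu
      refine ⟨hgv, ?_, ?_⟩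
      · intro a ha; rw [hlab] at ha; cases ha
      · intro _
        exact ⟨x, cx, rfl, by simp, hsx, hσ _ _ hsx, hunf⟩
  | con hlab hsucc hrs hLs hch hnot hdisj ih =>
    rename_i c ts v rs Ls
    intro gv hnd hinj hgv hunf
    rw [gsubst_con] at hunf
    cases hunf with
    | con hlabG hlenG hchildG =>
      rw [List.length_map] at hlenG
      -- disjointness of distinct children's node sets
      have huniq : ∀ u i j, i < ts.length → j < ts.length →
          u ∈ Ls.getD i ∅ → u ∈ Ls.getD j ∅ → i = j := by
        intro u i j hi hj hui huj
        by_contra hne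
        rcases hdisj i j hi hj hne u hui huj with ⟨⟨x, hx, hux⟩, ⟨y, hy, huy⟩⟩
        have hxv : x ∈ (GTerm.con c ts).varsL := by
          rw [varsL_con]
          exact List.mem_flatMap.mpr ⟨_, getD_mem_of_lt hi _, hx⟩
        have hyv : y ∈ (GTerm.con c ts).varsL := by
          rw [varsL_con]
          exact List.mem_flatMap.mpr ⟨_, getD_mem_of_lt hj _, hy⟩
        have hxy : x = y := hinj x hxv y hyv (by rw [← hux, ← huy])
        subst hxy
        exact varsL_parts_disj ts (by rw [varsL_con] at hnd; exact hnd)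
          i j hi hj hne x hx hy
      -- children data
      have hchdata : ∀ j, j < ts.length → ∃ φj : ℕ → ℕ,
          φj (rs.getD j 0) = (G.succ gv).getD j 0 ∧
          ∀ u ∈ Ls.getD j ∅, φj u ∈ G.V ∧
            (∀ a, Hlab u = some a → G.lab (φj u) = some a ∧
              G.succ (φj u) = (Hsucc u).map φj) ∧
            (Hlab u = none → ∃ x cx, u = vm x ∧ x ∈ (ts.getD j (GTerm.var 0)).varsL ∧
              σ x = some cx ∧ IsConTerm cx ∧ G.Unfolds (φj u) cx) := by
        intro j hj
        have hgvj : (G.succ gv).getD j 0 ∈ G.V := by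
          refine hwf.succ_mem gv hgv _ (getD_mem_of_lt ?_ 0)
          omega
        have hunfj : G.Unfolds ((G.succ gv).getD j 0) (GTerm.gsubst σ (ts.getD j (GTerm.var 0))) := by
          have := hchildG j (by simpa using hj)
          rwa [List.getElem_map, ← List.getD_eq_getElem ts (GTerm.var 0) hj] at this
        have hndj : (ts.getD j (GTerm.var 0)).varsL.Nodup :=
          varsL_part_nodup ts (by rw [varsL_con] at hnd; exact hnd) j hj
        have hinjj : ∀ x ∈ (ts.getD j (GTerm.var 0)).varsL,
            ∀ y ∈ (ts.getD j (GTerm.var 0)).varsL, vm x = vm y → x = y := by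
          intro x hx y hy
          refine hinj x ?_ y ?_ <;>
            · rw [varsL_con]
              exact List.mem_flatMap.mpr ⟨_, getD_mem_of_lt hj _, ‹_›⟩
        exact ih j hj ((G.succ gv).getD j 0) hndj hinjj hgvj hunfj
      choose Φ hΦ1 hΦ2 using hchdata
      -- the merged homomorphism
      classical
      set φ : ℕ → ℕ := fun u =>
        if h : ∃ j, j < ts.length ∧ u ∈ Ls.getD j ∅ then
          Φ (Nat.find h) (Nat.find_spec h).1 u
        else gv with hφdef
      have hφ_child : ∀ j (hj : j < ts.length) u, u ∈ Ls.getD j ∅ → φ u = Φ j hj u := by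
        intro j hj u hu
        have hex : ∃ k, k < ts.length ∧ u ∈ Ls.getD k ∅ := ⟨j, hj, hu⟩
        rw [hφdef]
        simp only [hex, dif_pos]
        have hspec := Nat.find_spec hex
        have : Nat.find hex = j := huniq u _ _ hspec.1 hj hspec.2 hu
        subst this
        rfl
      have hφ_root : φ v = gv := by
        rw [hφdef]
        have : ¬ ∃ j, j < ts.length ∧ v ∈ Ls.getD j ∅ := by
          rintro ⟨j, hj, hv'⟩
          exact hnot _ (getD_mem_of_lt (by omega) ∅) hv'
        simp only [this, dif_neg, not_false_iff]
      refine ⟨φ, hφ_root, ?_⟩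
      intro u hu
      rcases Finset.mem_insert.mp hu with rfl | hu
      · refine ⟨hφ_root ▸ hgv, ?_, ?_⟩
        · intro a ha
          rw [hlab] at ha
          injection ha with ha
          subst ha
          rw [hφ_root]
          refine ⟨hlabG, ?_⟩
          rw [hsucc]
          refine List.ext_getElem (by rw [List.length_map]; omega) ?_
          intro j h1 h2
          have hj : j < ts.length := by omega
          have hmem : rs.getD j 0 ∈ Ls.getD j ∅ := (hch j hj).root_mem
          rw [List.getElem_map]
          rw [show rs[j] = rs.getD j 0 from (List.getD_eq_getElem rs 0 (by omega)).symm]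
          rw [hφ_child j hj _ hmem, hΦ1 j hj]
          exact (List.getD_eq_getElem _ 0 h1).symm
        · intro hnone; rw [hlab] at hnone; cases hnone
      · rcases mem_unionL.mp hu with ⟨T, hT, huT⟩
        rcases mem_getD_of_mem_mem hT huT with ⟨j, hjL, hu'⟩
        have hj : j < ts.length := by omega
        have hφu : φ u = Φ j hj u := hφ_child j hj u hu'
        obtain ⟨hV, hlabc, hnonec⟩ := hΦ2 j hj u hu'
        refine ⟨hφu ▸ hV, ?_, ?_⟩
        · intro a ha
          obtain ⟨h1, h2⟩ := hlabc a ha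
          rw [hφu]
          refine ⟨h1, ?_⟩
          rw [h2]
          refine List.map_congr_left ?_
          intro b hb
          have hbmem : b ∈ Ls.getD j ∅ := (hch j hj).succ_closed u hu' b hb
          exact (hφ_child j hj b hbmem).symm
        · intro hnone
          rcases hnonec hnone with ⟨x, cx, hux, hxv, hsx, hcon, hunfx⟩
          refine ⟨x, cx, hux, ?_, hsx, hcon, hφu ▸ hunfx⟩
          rw [varsL_con]
          exact List.mem_flatMap.mpr ⟨_, getD_mem_of_lt hj _, hxv⟩
  | fn hlab hsucc hrs hLs hch hnot hdisj ih =>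
    rename_i f ts v rs Ls
    intro gv hnd hinj hgv hunf
    rw [gsubst_fn] at hunf
    cases hunf with
    | fn hlabG hlenG hchildG =>
      rw [List.length_map] at hlenG
      have huniq : ∀ u i j, i < ts.length → j < ts.length →
          u ∈ Ls.getD i ∅ → u ∈ Ls.getD j ∅ → i = j := by
        intro u i j hi hj hui huj
        by_contra hne
        rcases hdisj i j hi hj hne u hui huj with ⟨⟨x, hx, hux⟩, ⟨y, hy, huy⟩⟩
        have hxv : x ∈ (GTerm.fn f ts).varsL := by
          rw [varsL_fn]
          exact List.mem_flatMap.mpr ⟨_, getD_mem_of_lt hi _, hx⟩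
        have hyv : y ∈ (GTerm.fn f ts).varsL := by
          rw [varsL_fn]
          exact List.mem_flatMap.mpr ⟨_, getD_mem_of_lt hj _, hy⟩
        have hxy : x = y := hinj x hxv y hyv (by rw [← hux, ← huy])
        subst hxy
        exact varsL_parts_disj ts (by rw [varsL_fn] at hnd; exact hnd)
          i j hi hj hne x hx hy
      have hchdata : ∀ j, j < ts.length → ∃ φj : ℕ → ℕ,
          φj (rs.getD j 0) = (G.succ gv).getD j 0 ∧
          ∀ u ∈ Ls.getD j ∅, φj u ∈ G.V ∧
            (∀ a, Hlab u = some a → G.lab (φj u) = some a ∧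
              G.succ (φj u) = (Hsucc u).map φj) ∧
            (Hlab u = none → ∃ x cx, u = vm x ∧ x ∈ (ts.getD j (GTerm.var 0)).varsL ∧
              σ x = some cx ∧ IsConTerm cx ∧ G.Unfolds (φj u) cx) := by
        intro j hj
        have hgvj : (G.succ gv).getD j 0 ∈ G.V := by
          refine hwf.succ_mem gv hgv _ (getD_mem_of_lt ?_ 0)
          omega
        have hunfj : G.Unfolds ((G.succ gv).getD j 0) (GTerm.gsubst σ (ts.getD j (GTerm.var 0))) := by
          have := hchildG j (by simpa using hj)
          rwa [List.getElem_map, ← List.getD_eq_getElem ts (GTerm.var 0) hj] at this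
        have hndj : (ts.getD j (GTerm.var 0)).varsL.Nodup :=
          varsL_part_nodup ts (by rw [varsL_fn] at hnd; exact hnd) j hj
        have hinjj : ∀ x ∈ (ts.getD j (GTerm.var 0)).varsL,
            ∀ y ∈ (ts.getD j (GTerm.var 0)).varsL, vm x = vm y → x = y := by
          intro x hx y hy
          refine hinj x ?_ y ?_ <;>
            · rw [varsL_fn]
              exact List.mem_flatMap.mpr ⟨_, getD_mem_of_lt hj _, ‹_›⟩
        exact ih j hj ((G.succ gv).getD j 0) hndj hinjj hgvj hunfj
      choose Φ hΦ1 hΦ2 using hchdata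
      classical
      set φ : ℕ → ℕ := fun u =>
        if h : ∃ j, j < ts.length ∧ u ∈ Ls.getD j ∅ then
          Φ (Nat.find h) (Nat.find_spec h).1 u
        else gv with hφdef
      have hφ_child : ∀ j (hj : j < ts.length) u, u ∈ Ls.getD j ∅ → φ u = Φ j hj u := by
        intro j hj u hu
        have hex : ∃ k, k < ts.length ∧ u ∈ Ls.getD k ∅ := ⟨j, hj, hu⟩
        rw [hφdef]
        simp only [hex, dif_pos]
        have hspec := Nat.find_spec hex
        have : Nat.find hex = j := huniq u _ _ hspec.1 hj hspec.2 hu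
        subst this
        rfl
      have hφ_root : φ v = gv := by
        rw [hφdef]
        have : ¬ ∃ j, j < ts.length ∧ v ∈ Ls.getD j ∅ := by
          rintro ⟨j, hj, hv'⟩
          exact hnot _ (getD_mem_of_lt (by omega) ∅) hv'
        simp only [this, dif_neg, not_false_iff]
      refine ⟨φ, hφ_root, ?_⟩
      intro u hu
      rcases Finset.mem_insert.mp hu with rfl | hu
      · refine ⟨hφ_root ▸ hgv, ?_, ?_⟩
        · intro a ha
          rw [hlab] at ha
          injection ha with ha
          subst ha
          rw [hφ_root]
          refine ⟨hlabG, ?_⟩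
          rw [hsucc]
          refine List.ext_getElem (by rw [List.length_map]; omega) ?_
          intro j h1 h2
          have hj : j < ts.length := by omega
          have hmem : rs.getD j 0 ∈ Ls.getD j ∅ := (hch j hj).root_mem
          rw [List.getElem_map]
          rw [show rs[j] = rs.getD j 0 from (List.getD_eq_getElem rs 0 (by omega)).symm]
          rw [hφ_child j hj _ hmem, hΦ1 j hj]
          exact (List.getD_eq_getElem _ 0 h1).symm
        · intro hnone; rw [hlab] at hnone; cases hnone
      · rcases mem_unionL.mp hu with ⟨T, hT, huT⟩
        rcases mem_getD_of_mem_mem hT huT with ⟨j, hjL, hu'⟩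
        have hj : j < ts.length := by omega
        have hφu : φ u = Φ j hj u := hφ_child j hj u hu'
        obtain ⟨hV, hlabc, hnonec⟩ := hΦ2 j hj u hu'
        refine ⟨hφu ▸ hV, ?_, ?_⟩
        · intro a ha
          obtain ⟨h1, h2⟩ := hlabc a ha
          rw [hφu]
          refine ⟨h1, ?_⟩
          rw [h2]
          refine List.map_congr_left ?_
          intro b hb
          have hbmem : b ∈ Ls.getD j ∅ := (hch j hj).succ_closed u hu' b hb
          exact (hφ_child j hj b hbmem).symm
        · intro hnone
          rcases hnonec hnone with ⟨x, cx, hux, hxv, hsx, hcon, hunfx⟩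
          refine ⟨x, cx, hux, ?_, hsx, hcon, hφu ▸ hunfx⟩
          rw [varsL_fn]
          exact List.mem_flatMap.mpr ⟨_, getD_mem_of_lt hj _, hxv⟩

/-! ### The fired graph -/

noncomputable def off (G : TGraph C F) : ℕ := G.V.sup id + 1

noncomputable def ψf (G H : TGraph C F) (l : ℕ) (φ : ℕ → ℕ) (v : ℕ) : ℕ :=
  if H.Reach l v then φ v else v + off G

noncomputable def rdf (G H : TGraph C F) (l r : ℕ) (φ : ℕ → ℕ) (w : ℕ) : ℕ :=
  if w = φ l then ψf G H l φ r else w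

noncomputable def copiesf (G H : TGraph C F) (l r : ℕ) : Finset ℕ :=
  (H.V.filter (fun v => H.Reach r v ∧ ¬ H.Reach l v)).image (· + off G)

theorem fire_lab (G H : TGraph C F) (l r : ℕ) (φ : ℕ → ℕ) (v : ℕ) :
    (TGraph.fire G H l r φ).lab v =
      if v ∈ copiesf G H l r then H.lab (v - off G) else G.lab v := rfl

theorem fire_succ (G H : TGraph C F) (l r : ℕ) (φ : ℕ → ℕ) (v : ℕ) :
    (TGraph.fire G H l r φ).succ v =
      if v ∈ copiesf G H l r then
        ((H.succ (v - off G)).map (ψf G H l φ)).map (rdf G H l r φ)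
      else (G.succ v).map (rdf G H l r φ) := rfl

theorem fire_root (G H : TGraph C F) (l r : ℕ) (φ : ℕ → ℕ) :
    (TGraph.fire G H l r φ).root = rdf G H l r φ G.root := rfl

theorem mem_V_lt_off {G : TGraph C F} {v : ℕ} (hv : v ∈ G.V) : v < off G := by
  have h : v ≤ G.V.sup id := by simpa using Finset.le_sup (f := id) hv
  unfold off
  omega

theorem mem_copies_off_le {G H : TGraph C F} {l r : ℕ} {u : ℕ}
    (hu : u ∈ copiesf G H l r) : off G ≤ u := by
  rcases Finset.mem_image.mp hu with ⟨a, _, rfl⟩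
  omega

theorem not_mem_copies {G H : TGraph C F} {l r : ℕ} {v : ℕ} (hv : v ∈ G.V) :
    v ∉ copiesf G H l r := by
  intro h
  have := mem_copies_off_le h
  have := mem_V_lt_off hv
  omega

/-- (U1) Vertices of `G` that do not reach the redex root unfold unchanged. -/
theorem unfolds_fire_of_not_reach {arc : C → ℕ} {arf : F → ℕ} {G : TGraph C F}
    (hwf : G.WFG arc arf) (H : TGraph C F) (l r : ℕ) (φ : ℕ → ℕ) :
    ∀ {v : ℕ} {s : GTerm C F}, G.Unfolds v s → v ∈ G.V → ¬ G.Reach v (φ l) →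
      (TGraph.fire G H l r φ).Unfolds v s := by
  intro v s hunf
  induction hunf with
  | con hlab hlen hchild ih =>
    rename_i v c ts
    intro hv hnr
    have hsucc_eq : (TGraph.fire G H l r φ).succ v = G.succ v := by
      rw [fire_succ, if_neg (not_mem_copies hv)]
      refine List.map_congr_left ?_ |>.trans (List.map_id _)
      intro b hb
      have hbne : b ≠ φ l := by
        intro hbe
        exact hnr (Relation.ReflTransGen.single (hbe ▸ ⟨hv, hb⟩))
      simp [rdf, hbne]
    refine TGraph.Unfolds.con ?_ ?_ ?_
    · rw [fire_lab, if_neg (not_mem_copies hv)]; exact hlab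
    · rw [hsucc_eq]; exact hlen
    · intro j hj
      rw [hsucc_eq]
      have hjlen : j < (G.succ v).length := by omega
      have hbmem : (G.succ v).getD j 0 ∈ G.succ v := getD_mem_of_lt hjlen 0
      have hbV : (G.succ v).getD j 0 ∈ G.V := hwf.succ_mem v hv _ hbmem
      have hbnr : ¬ G.Reach ((G.succ v).getD j 0) (φ l) := by
        intro h
        exact hnr (Relation.ReflTransGen.head ⟨hv, hbmem⟩ h)
      exact ih j hj hbV hbnr
  | fn hlab hlen hchild ih =>
    rename_i v f ts
    intro hv hnr
    have hsucc_eq : (TGraph.fire G H l r φ).succ v = G.succ v := by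
      rw [fire_succ, if_neg (not_mem_copies hv)]
      refine List.map_congr_left ?_ |>.trans (List.map_id _)
      intro b hb
      have hbne : b ≠ φ l := by
        intro hbe
        exact hnr (Relation.ReflTransGen.single (hbe ▸ ⟨hv, hb⟩))
      simp [rdf, hbne]
    refine TGraph.Unfolds.fn ?_ ?_ ?_
    · rw [fire_lab, if_neg (not_mem_copies hv)]; exact hlab
    · rw [hsucc_eq]; exact hlen
    · intro j hj
      rw [hsucc_eq]
      have hjlen : j < (G.succ v).length := by omega
      have hbmem : (G.succ v).getD j 0 ∈ G.succ v := getD_mem_of_lt hjlen 0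
      have hbV : (G.succ v).getD j 0 ∈ G.V := hwf.succ_mem v hv _ hbmem
      have hbnr : ¬ G.Reach ((G.succ v).getD j 0) (φ l) := by
        intro h
        exact hnr (Relation.ReflTransGen.head ⟨hv, hbmem⟩ h)
      exact ih j hj hbV hbnr

/-- (U2) The copied right-hand side unfolds to the substituted right-hand side. -/
theorem unfolds_fire_rhs {arc : C → ℕ} {arf : F → ℕ} {G : TGraph C F}
    (hwf : G.WFG arc arf) (H : TGraph C F) (l r : ℕ) (φ : ℕ → ℕ)
    (σ : ℕ → Option (GTerm C F)) {vm : ℕ → ℕ}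
    (hφl : φ l ∈ G.V)
    (hlabφl : ∃ f₀ : F, G.lab (φ l) = some (Sum.inr f₀)) :
    ∀ {s : GTerm C F} {hv : ℕ} {S : Finset ℕ},
      TR H.lab H.succ vm s hv S →
      (∀ u ∈ S, (H.lab u).isSome → u ∈ H.V ∧ H.Reach r u ∧ ¬ H.Reach l u) →
      (∀ x ∈ s.varsL, H.Reach l (vm x)) →
      (∀ x ∈ s.varsL, ∃ cx, σ x = some cx ∧ IsConTerm cx ∧
        G.Unfolds (φ (vm x)) cx ∧ φ (vm x) ∈ G.V) →
      (TGraph.fire G H l r φ).Unfolds (rdf G H l r φ (ψf G H l φ hv)) (GTerm.gsubst σ s) := by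
  intro s hv S htr
  induction htr with
  | var hlab hsucc =>
    rename_i x
    intro hcopy hrv hvar
    rcases hvar x (by simp) with ⟨cx, hsx, hcx, hunfx, hVx⟩
    have hψ : ψf G H l φ (vm x) = φ (vm x) := by
      rw [ψf, if_pos (hrv x (by simp))]
    have hne : φ (vm x) ≠ φ l := by
      intro he
      rcases hlabφl with ⟨f₀, hf₀⟩
      rcases conterm_reach hwf hunfx hcx hVx (φ (vm x)) Relation.ReflTransGen.refl with ⟨c, hc⟩
      rw [he, hf₀] at hc
      cases hc
    have hrd : rdf G H l r φ (ψf G H l φ (vm x)) = φ (vm x) := by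
      rw [hψ, rdf, if_neg hne]
    rw [hrd, gsubst_var, hsx, Option.getD_some]
    have hnr : ¬ G.Reach (φ (vm x)) (φ l) := by
      intro h
      rcases hlabφl with ⟨f₀, hf₀⟩
      rcases conterm_reach hwf hunfx hcx hVx (φ l) h with ⟨c, hc⟩
      rw [hf₀] at hc
      cases hc
    exact unfolds_fire_of_not_reach hwf H l r φ hunfx hVx hnr
  | con hlab hsucc hrs hLs hch hnot hdisj ih =>
    rename_i c ts v rs Ls
    intro hcopy hrv hvar
    have hvS : v ∈ insert v (unionL Ls) := by simp
    obtain ⟨hHV, hRr, hRl⟩ := hcopy v hvS (by rw [hlab]; rfl)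
    have hψ : ψf G H l φ v = v + off G := by rw [ψf, if_neg hRl]
    have hne : v + off G ≠ φ l := by
      have := mem_V_lt_off hφl
      omega
    have hrd : rdf G H l r φ (ψf G H l φ v) = v + off G := by rw [hψ, rdf, if_neg hne]
    have hmemcopies : v + off G ∈ copiesf G H l r :=
      Finset.mem_image.mpr ⟨v, Finset.mem_filter.mpr ⟨hHV, hRr, hRl⟩, rfl⟩
    rw [hrd, gsubst_con]
    have hcancel : v + off G - off G = v := by omega
    refine TGraph.Unfolds.con ?_ ?_ ?_
    · rw [fire_lab, if_pos hmemcopies, hcancel]; exact hlab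
    · rw [fire_succ, if_pos hmemcopies, hcancel, hsucc]
      simp only [List.length_map]
      omega
    · intro j hj
      rw [List.length_map] at hj
      rw [fire_succ, if_pos hmemcopies, hcancel, hsucc]
      have h1 : ((rs.map (ψf G H l φ)).map (rdf G H l r φ)).getD j 0 =
          rdf G H l r φ (ψf G H l φ (rs.getD j 0)) := by
        rw [map_getD _ _ j (by simp; omega) 0 0, map_getD _ _ j (by omega) 0 0]
      rw [h1]
      have h2 : (ts.map (GTerm.gsubst σ))[j] = GTerm.gsubst σ (ts.getD j (GTerm.var 0)) := by
        rw [List.getElem_map, ← List.getD_eq_getElem ts (GTerm.var 0) hj]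
      rw [h2]
      refine ih j hj ?_ ?_ ?_
      · intro u hu hsome
        exact hcopy u (Finset.mem_insert_of_mem (mem_unionL_getD (by omega) hu)) hsome
      · intro x hx
        refine hrv x ?_
        rw [varsL_con]
        exact List.mem_flatMap.mpr ⟨_, getD_mem_of_lt hj _, hx⟩
      · intro x hx
        refine hvar x ?_
        rw [varsL_con]
        exact List.mem_flatMap.mpr ⟨_, getD_mem_of_lt hj _, hx⟩
  | fn hlab hsucc hrs hLs hch hnot hdisj ih =>
    rename_i f ts v rs Ls
    intro hcopy hrv hvar
    have hvS : v ∈ insert v (unionL Ls) := by simp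
    obtain ⟨hHV, hRr, hRl⟩ := hcopy v hvS (by rw [hlab]; rfl)
    have hψ : ψf G H l φ v = v + off G := by rw [ψf, if_neg hRl]
    have hne : v + off G ≠ φ l := by
      have := mem_V_lt_off hφl
      omega
    have hrd : rdf G H l r φ (ψf G H l φ v) = v + off G := by rw [hψ, rdf, if_neg hne]
    have hmemcopies : v + off G ∈ copiesf G H l r :=
      Finset.mem_image.mpr ⟨v, Finset.mem_filter.mpr ⟨hHV, hRr, hRl⟩, rfl⟩
    rw [hrd, gsubst_fn]
    have hcancel : v + off G - off G = v := by omega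
    refine TGraph.Unfolds.fn ?_ ?_ ?_
    · rw [fire_lab, if_pos hmemcopies, hcancel]; exact hlab
    · rw [fire_succ, if_pos hmemcopies, hcancel, hsucc]
      simp only [List.length_map]
      omega
    · intro j hj
      rw [List.length_map] at hj
      rw [fire_succ, if_pos hmemcopies, hcancel, hsucc]
      have h1 : ((rs.map (ψf G H l φ)).map (rdf G H l r φ)).getD j 0 =
          rdf G H l r φ (ψf G H l φ (rs.getD j 0)) := by
        rw [map_getD _ _ j (by simp; omega) 0 0, map_getD _ _ j (by omega) 0 0]
      rw [h1]
      have h2 : (ts.map (GTerm.gsubst σ))[j] = GTerm.gsubst σ (ts.getD j (GTerm.var 0)) := by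
        rw [List.getElem_map, ← List.getD_eq_getElem ts (GTerm.var 0) hj]
      rw [h2]
      refine ih j hj ?_ ?_ ?_
      · intro u hu hsome
        exact hcopy u (Finset.mem_insert_of_mem (mem_unionL_getD (by omega) hu)) hsome
      · intro x hx
        refine hrv x ?_
        rw [varsL_fn]
        exact List.mem_flatMap.mpr ⟨_, getD_mem_of_lt hj _, hx⟩
      · intro x hx
        refine hvar x ?_
        rw [varsL_fn]
        exact List.mem_flatMap.mpr ⟨_, getD_mem_of_lt hj _, hx⟩

/-- (U3) Unfolding of the fired graph along the spine to the redex. -/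
theorem unfolds_fire_spine {arc : C → ℕ} {arf : F → ℕ} {G : TGraph C F}
    (hwf : G.WFG arc arf) (H : TGraph C F) (l r : ℕ) (φ : ℕ → ℕ)
    {R : GTerm C F}
    (htgt : (TGraph.fire G H l r φ).Unfolds (ψf G H l φ r) R)
    (htgt_ne : ψf G H l φ r ≠ φ l) :
    ∀ (p : List ℕ) (v : ℕ) (s s' : GTerm C F),
      v ∈ G.V → G.follow v p = some (φ l) →
      (∀ q, G.follow v q = some (φ l) → q = p) →
      G.Unfolds v s → ReplAt R s p s' →
      (TGraph.fire G H l r φ).Unfolds (rdf G H l r φ v) s' := by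
  intro p
  induction p with
  | nil =>
    intro v s s' hv hfol huniq hunf hrepl
    cases hfol
    cases hrepl
    rw [rdf, if_pos rfl]
    exact htgt
  | cons i p ih =>
    intro v s s' hv hfol huniq hunf hrepl
    rw [follow_cons] at hfol
    rcases Option.bind_eq_some_iff.mp hfol with ⟨b, hb, hfolb⟩
    have hbmem : b ∈ G.succ v := List.mem_of_getElem? hb
    have hbV : b ∈ G.V := hwf.succ_mem v hv b hbmem
    have hRb : G.Reach b (φ l) := (follow_mem_reach hwf p b (φ l) hbV hfolb).2
    have hvne : v ≠ φ l := by
      intro he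
      exact hwf.acyclic v (Relation.TransGen.head' ⟨hv, hbmem⟩ (by rw [he]; exact hRb))
    have hrdv : rdf G H l r φ v = v := by rw [rdf, if_neg hvne]
    rw [hrdv]
    have hilen : i < (G.succ v).length := by
      by_contra hge
      rw [List.getElem?_eq_none (by omega)] at hb
      cases hb
    have hbeq : b = (G.succ v).getD i 0 := by
      rw [List.getD_eq_getElem _ _ hilen]
      rw [getElem?_eq_get_aux hilen] at hb
      injection hb with hb
      rw [← hb]
      rfl
    cases hunf with
    | con hlab hlen hchild =>
      cases hrepl with
      | con hi hsub =>
        rename_i c ts si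
        have hsucc1 : (TGraph.fire G H l r φ).succ v = (G.succ v).map (rdf G H l r φ) := by
          rw [fire_succ, if_neg (not_mem_copies hv)]
        refine TGraph.Unfolds.con ?_ ?_ ?_
        · rw [fire_lab, if_neg (not_mem_copies hv)]; exact hlab
        · rw [hsucc1, List.length_map, List.length_set]; exact hlen
        · intro j hj
          simp only [List.length_set] at hj
          rw [hsucc1, map_getD _ _ j (by omega) 0 0]
          by_cases hji : j = i
          · subst hji
            rw [List.getElem_set_self (by omega)]
            have hbuniq : ∀ q, G.follow b q = some (φ l) → q = p := by
              intro q hq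
              have : G.follow v (j :: q) = some (φ l) := by
                rw [follow_cons, hb, Option.bind_some]
                exact hq
              have := huniq (j :: q) this
              injection this with _ h
            have hjt : j < ts.length := by simpa using hj
            have hchj : G.Unfolds b ts[j] := hbeq ▸ hchild j hjt
            have := ih b ts[j] _ hbV hfolb hbuniq hchj hsub
            rw [hbeq] at this
            exact this
          · rw [List.getElem_set_ne (fun he => hji he.symm)]
            set bj := (G.succ v).getD j 0 with hbjdef
            have hbjmem : bj ∈ G.succ v := getD_mem_of_lt (by omega) 0
            have hbjV : bj ∈ G.V := hwf.succ_mem v hv bj hbjmem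
            have hbjnr : ¬ G.Reach bj (φ l) := by
              intro hre
              rcases reach_exists_follow hre with ⟨q, hq⟩
              have : G.follow v (j :: q) = some (φ l) := by
                rw [follow_cons, getElem?_eq_get_aux (by omega : j < (G.succ v).length),
                  Option.bind_some]
                have : (G.succ v).get ⟨j, by omega⟩ = bj := by
                  rw [hbjdef, List.getD_eq_getElem _ _ (by omega)]
                  simp [List.getElem?_eq_getElem (by omega : j < (G.succ v).length)]
                rw [this]
                exact hq
              have := huniq (j :: q) this
              injection this with h _
              exact hji h
            have hbjne : bj ≠ φ l := fun he => hbjnr (he ▸ Relation.ReflTransGen.refl)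
            rw [show rdf G H l r φ bj = bj from by rw [rdf, if_neg hbjne]]
            exact unfolds_fire_of_not_reach hwf H l r φ (hchild j hj) hbjV hbjnr
    | fn hlab hlen hchild =>
      cases hrepl with
      | fn hi hsub =>
        rename_i f ts si
        have hsucc1 : (TGraph.fire G H l r φ).succ v = (G.succ v).map (rdf G H l r φ) := by
          rw [fire_succ, if_neg (not_mem_copies hv)]
        refine TGraph.Unfolds.fn ?_ ?_ ?_
        · rw [fire_lab, if_neg (not_mem_copies hv)]; exact hlab
        · rw [hsucc1, List.length_map, List.length_set]; exact hlen
        · intro j hj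
          simp only [List.length_set] at hj
          rw [hsucc1, map_getD _ _ j (by omega) 0 0]
          by_cases hji : j = i
          · subst hji
            rw [List.getElem_set_self (by omega)]
            have hbuniq : ∀ q, G.follow b q = some (φ l) → q = p := by
              intro q hq
              have : G.follow v (j :: q) = some (φ l) := by
                rw [follow_cons, hb, Option.bind_some]
                exact hq
              have := huniq (j :: q) this
              injection this with _ h
            have hjt : j < ts.length := by simpa using hj
            have hchj : G.Unfolds b ts[j] := hbeq ▸ hchild j hjt
            have := ih b ts[j] _ hbV hfolb hbuniq hchj hsub
            rw [hbeq] at this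
            exact this
          · rw [List.getElem_set_ne (fun he => hji he.symm)]
            set bj := (G.succ v).getD j 0 with hbjdef
            have hbjmem : bj ∈ G.succ v := getD_mem_of_lt (by omega) 0
            have hbjV : bj ∈ G.V := hwf.succ_mem v hv bj hbjmem
            have hbjnr : ¬ G.Reach bj (φ l) := by
              intro hre
              rcases reach_exists_follow hre with ⟨q, hq⟩
              have : G.follow v (j :: q) = some (φ l) := by
                rw [follow_cons, getElem?_eq_get_aux (by omega : j < (G.succ v).length),
                  Option.bind_some]
                have : (G.succ v).get ⟨j, by omega⟩ = bj := by
                  rw [hbjdef, List.getD_eq_getElem _ _ (by omega)]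
                  simp [List.getElem?_eq_getElem (by omega : j < (G.succ v).length)]
                rw [this]
                exact hq
              have := huniq (j :: q) this
              injection this with h _
              exact hji h
            have hbjne : bj ≠ φ l := fun he => hbjnr (he ▸ Relation.ReflTransGen.refl)
            rw [show rdf G H l r φ bj = bj from by rw [rdf, if_neg hbjne]]
            exact unfolds_fire_of_not_reach hwf H l r φ (hchild j hj) hbjV hbjnr

end GAux

/-- If t rewrites to u in one step of an orthogonal constructor rewrite system and
G is a closed, constructor-shared term graph unfolding to t, then G rewrites in one
step of the corresponding graph rewrite system to a graph I unfolding to u. -/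
theorem graph_step_complete {C F : Type} (arc : C → ℕ) (arf : F → ℕ)
    (Rs : Set (GRule C F)) (horth : Orthogonal arc arf Rs)
    (t u : GTerm C F) (G : TGraph C F)
    (hstep : XStep Rs t u)
    (hwf : TGraph.WFG arc arf G) (hcl : TGraph.ClosedG G)
    (hcs : TGraph.ConstructorShared G)
    (ht : TGraph.Unfolds G G.root t) :
    ∃ I : TGraph C F, GStep Rs G I ∧ TGraph.Unfolds I I.root u := by
  classical
  open GAux GTerm TGraph in
  obtain ⟨hwfrules, -⟩ := horth
  rcases GAux.locate hstep hwf G.root hwf.root_mem ht with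
    ⟨ro, σ, p, w, hro, hσ, hfol, hwV, hunfw, hrepl⟩
  obtain ⟨hpat, hlenargs, hwft, hnodupargs, hwfrhs, hrhsvars⟩ := hwfrules ro hro
  set lhs : GTerm C F := GTerm.fn ro.f ro.args with hlhs
  set vs : List ℕ := lhs.varsL.dedup with hvs
  set vm : ℕ → ℕ := fun x => vs.idxOf x with hvmdef
  set s₀ : GB C F := ⟨vs.length, fun _ => none, fun _ => []⟩ with hs₀
  set P := buildT vm lhs s₀ with hP
  set Q := buildT vm ro.rhs P.2 with hQ
  set Hg : TGraph C F :=
    { V := Finset.range Q.2.next, lab := Q.2.lab, succ := Q.2.succ, root := P.1 } with hHg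
  have hH1 : (ruleGraph ro).1 = Hg := rfl
  have hH2 : (ruleGraph ro).2.1 = P.1 := rfl
  have hH3 : (ruleGraph ro).2.2 = Q.1 := rfl
  -- variables of the terms
  have hlhsvars : lhs.varsL = ro.args.flatMap GTerm.varsL := by
    rw [hlhs, GAux.varsL_fn]
  have hmemvs : ∀ x ∈ lhs.varsL, x ∈ vs := by
    intro x hx; rw [hvs]; exact List.mem_dedup.mpr hx
  have hrhs_sub : ∀ x ∈ ro.rhs.varsL, x ∈ lhs.varsL := by
    intro x hx; rw [hlhsvars]; exact hrhsvars x hx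
  have hvm0 : ∀ x ∈ lhs.varsL, vm x < s₀.next ∧ s₀.lab (vm x) = none ∧ s₀.succ (vm x) = [] := by
    intro x hx
    refine ⟨?_, rfl, rfl⟩
    show vs.idxOf x < vs.length
    exact List.idxOf_lt_length_iff.mpr (hmemvs x hx)
  obtain ⟨hle1, hpres1, Sl, hTRl, hSlbd⟩ := GAux.buildT_spec vm lhs s₀ hvm0
  rw [← hP] at hle1 hpres1 hTRl hSlbd
  have hs₀next : s₀.next = vs.length := rfl
  have hvm1 : ∀ x ∈ ro.rhs.varsL,
      vm x < P.2.next ∧ P.2.lab (vm x) = none ∧ P.2.succ (vm x) = [] := by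
    intro x hx
    obtain ⟨h1, h2, h3⟩ := hvm0 x (hrhs_sub x hx)
    have h4 := hpres1 (vm x) h1
    exact ⟨by omega, h4.1.trans h2, h4.2.trans h3⟩
  obtain ⟨hle2, hpres2, Sr, hTRr, hSrbd⟩ := GAux.buildT_spec vm ro.rhs P.2 hvm1
  rw [← hQ] at hle2 hpres2 hTRr hSrbd
  -- transport the lhs tree to the full rule graph
  have hTRl' : GAux.TR Hg.lab Hg.succ vm lhs P.1 Sl := by
    refine hTRl.mono ?_
    intro u hu
    exact hpres2 u (hSlbd u hu).1
  have hTRr' : GAux.TR Hg.lab Hg.succ vm ro.rhs Q.1 Sr := hTRr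
  have hSlV : ∀ u ∈ Sl, u ∈ Hg.V := by
    intro u hu
    have := (hSlbd u hu).1
    simp only [hHg, Finset.mem_range]
    omega
  have hSrV : ∀ u ∈ Sr, u ∈ Hg.V := by
    intro u hu
    have := (hSrbd u hu).1
    simp only [hHg, Finset.mem_range]
    omega
  have hreach_sub : ∀ v, Hg.Reach P.1 v → v ∈ Sl := fun v hv => hTRl'.reach_subset v hv
  have hreach_mem : ∀ u ∈ Sl, Hg.Reach P.1 u := hTRl'.reach hSlV
  -- variable nodes are unlabelled in the full rule graph
  have hvarlab : ∀ x ∈ lhs.varsL, Hg.lab (vm x) = none := by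
    intro x hx
    obtain ⟨h1, h2, h3⟩ := hvm0 x hx
    have h4 := hpres1 (vm x) h1
    have h5 := hpres2 (vm x) (by omega)
    exact (h5.1.trans h4.1).trans h2
  -- the matching homomorphism
  have hnodup : lhs.varsL.Nodup := by rw [hlhsvars]; exact hnodupargs
  have hinj : ∀ x ∈ lhs.varsL, ∀ y ∈ lhs.varsL, vm x = vm y → x = y := by
    intro x hx y hy hxy
    exact (List.idxOf_inj (hmemvs x hx)).mp hxy
  have hunfw' : G.Unfolds w (GTerm.gsubst σ lhs) := by
    rw [hlhs, GAux.gsubst_fn]; exact hunfw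
  obtain ⟨φ, hφroot, hconds⟩ :=
    GAux.exphi hwf σ hσ hTRl' w hnodup hinj hwV hunfw'
  -- the redex
  have hredex : TGraph.IsRedex Hg P.1 G φ := by
    constructor
    · intro v hv
      obtain ⟨h1, h2, h3⟩ := hconds v (hreach_sub v hv)
      exact ⟨h1, h2⟩
    · intro v hv hnone w' hw'
      obtain ⟨h1, h2, h3⟩ := hconds v (hreach_sub v hv)
      rcases h3 hnone with ⟨x, cx, hux, hxv, hsx, hcon, hunfx⟩
      exact GAux.conterm_reach hwf hunfx hcon h1 w' hw'
  have hstepG : GStep Rs G (TGraph.fire G (ruleGraph ro).1 (ruleGraph ro).2.1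
      (ruleGraph ro).2.2 φ) := GStep.mk hro (by rw [hH1, hH2]; exact hredex)
  -- facts about the redex vertex
  have hlabw : G.lab w = some (Sum.inr ro.f) := by
    cases hunfw with
    | fn hlab _ _ => exact hlab
  have hφlV : φ P.1 ∈ G.V := hφroot ▸ hwV
  have hlabφl : G.lab (φ P.1) = some (Sum.inr ro.f) := by rw [hφroot]; exact hlabw
  -- variable information for the right-hand side
  have hvarinfo : ∀ x ∈ ro.rhs.varsL, ∃ cx, σ x = some cx ∧ GTerm.IsConTerm cx ∧
      G.Unfolds (φ (vm x)) cx ∧ φ (vm x) ∈ G.V := by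
    intro x hx
    have hxl : x ∈ lhs.varsL := hrhs_sub x hx
    have hmem : vm x ∈ Sl := hTRl'.var_mem x hxl
    obtain ⟨h1, h2, h3⟩ := hconds (vm x) hmem
    rcases h3 (hvarlab x hxl) with ⟨x', cx, hux, hx'v, hsx, hcon, hunfx⟩
    have hxx' : x = x' := hinj x hxl x' hx'v hux
    subst hxx'
    exact ⟨cx, hsx, hcon, hunfx, h1⟩
  have hreachvar : ∀ x ∈ ro.rhs.varsL, Hg.Reach P.1 (vm x) := by
    intro x hx
    exact hreach_mem (vm x) (hTRl'.var_mem x (hrhs_sub x hx))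
  have hcopy : ∀ u ∈ Sr, (Hg.lab u).isSome → u ∈ Hg.V ∧ Hg.Reach Q.1 u ∧
      ¬ Hg.Reach P.1 u := by
    intro u hu hsome
    refine ⟨hSrV u hu, hTRr'.reach hSrV u hu, ?_⟩
    intro hre
    have huSl : u ∈ Sl := hreach_sub u hre
    have hult : u < P.2.next := (hSlbd u huSl).1
    rcases (hSrbd u hu).2 with hge | ⟨x, hx, hux⟩
    · omega
    · rw [hux, hvarlab x (hrhs_sub x hx)] at hsome
      cases hsome
  -- the unfolding of the copied rhs
  have hU2 := GAux.unfolds_fire_rhs hwf Hg P.1 Q.1 φ σ hφlV ⟨ro.f, hlabφl⟩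
    hTRr' hcopy hreachvar hvarinfo
  -- the target of the redirection is not the redex vertex
  have htgt_ne : GAux.ψf G Hg P.1 φ Q.1 ≠ φ P.1 := by
    by_cases hR : Hg.Reach P.1 Q.1
    · rw [GAux.ψf, if_pos hR]
      have hQSl : Q.1 ∈ Sl := hreach_sub Q.1 hR
      have hQlt : Q.1 < P.2.next := (hSlbd Q.1 hQSl).1
      rcases (hSrbd Q.1 hTRr'.root_mem).2 with hge | ⟨x, hx, hqx⟩
      · omega
      · rcases hvarinfo x hx with ⟨cx, hsx, hcon, hunfx, hVx⟩
        intro he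
        rcases GAux.conterm_reach hwf hunfx hcon hVx (φ (vm x))
          Relation.ReflTransGen.refl with ⟨c, hc⟩
        rw [hqx] at he
        rw [he, hlabφl] at hc
        cases hc
    · rw [GAux.ψf, if_neg hR]
      have := GAux.mem_V_lt_off hφlV
      omega
  have hrdtgt : GAux.rdf G Hg P.1 Q.1 φ (GAux.ψf G Hg P.1 φ Q.1) =
      GAux.ψf G Hg P.1 φ Q.1 := by rw [GAux.rdf, if_neg htgt_ne]
  rw [hrdtgt] at hU2
  -- uniqueness of the path to the redex
  have hfolφ : G.follow G.root p = some (φ P.1) := by rw [hφroot]; exact hfol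
  have huniq : ∀ q, G.follow G.root q = some (φ P.1) → q = p := by
    intro q hq
    by_contra hne
    rcases hcs (φ P.1) q p hq hfolφ hne (φ P.1) Relation.ReflTransGen.refl with ⟨c, hc⟩
    rw [hlabφl] at hc
    cases hc
  -- conclude
  have hU3 := GAux.unfolds_fire_spine hwf Hg P.1 Q.1 φ hU2 htgt_ne p G.root t u
    hwf.root_mem hfolφ huniq ht hrepl
  refine ⟨TGraph.fire G (ruleGraph ro).1 (ruleGraph ro).2.1 (ruleGraph ro).2.2 φ,
    hstepG, ?_⟩
  rw [hH1, hH2, hH3]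
  rw [GAux.fire_root]
  exact hU3
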